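/- arXiv:2007.07665 — 6 statements merged into one kernel-verified Lean document; each statement's English description precedes it below -/
import Mathlib

section
/- (Proposition 1, one-step form) For every natural number N̄ ≥ 1 with d·(N̄+1) ≤ c, if R(N̄+1) ≤ R(N̄), then R(N̄+2) ≤ R(N̄+1). -/
private lemma concav_aux (β s a b u : ℝ) (hβ : 0 < β) (ha : 0 < a) (hb : 0 < b) (hba : b ≤ a)
    (hu : 0 < u) (hsu : u ≤ s) (h1 : 1 ≤ β * u ^ 2) :
    (1 + β * (s + a + b) ^ 2) * (1 + β * s ^ 2) ≤ (1 + β * (s + a) ^ 2) ^ 2 := by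
  have hs : 0 < s := hu.trans_le hsu
  have h2 : 1 + β * a ^ 2 + 2 * β * a * u ≤ β * (s + a) ^ 2 := by
    nlinarith [mul_le_mul_of_nonneg_left (mul_le_mul hsu hsu hu.le (hu.trans_le hsu).le) hβ.le,
      mul_le_mul_of_nonneg_left (mul_le_mul_of_nonneg_right hsu (mul_nonneg hβ.le ha.le)) (by norm_num : (0:ℝ) ≤ 2)]
  have habne : 0 ≤ s * (s + a + b) := by positivity
  have h4' : s * (s + a + b) ≤ (s + a) ^ 2 - a * b := by nlinarith [mul_nonneg hs.le (sub_nonneg.mpr hba)]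
  have H4 : β ^ 2 * ((s * (s + a + b)) ^ 2) ≤ β ^ 2 * (((s + a) ^ 2 - a * b) ^ 2) := by
    have := mul_le_mul h4' h4' habne (habne.trans h4')
    nlinarith [sq_nonneg β]
  have H5 : β * a * b * (1 + β * a ^ 2 + 2 * β * a * u) ≤ β * a * b * (β * (s + a) ^ 2) :=
    mul_le_mul_of_nonneg_left h2 (by positivity)
  have H6 : β ^ 2 * (a ^ 2 * b ^ 2) ≤ β ^ 2 * (a ^ 3 * b) := by
    have : a ^ 2 * b ^ 2 ≤ a ^ 3 * b := by
      nlinarith [mul_le_mul_of_nonneg_left hba (by positivity : (0:ℝ) ≤ a ^ 2 * b)]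
    nlinarith [sq_nonneg β]
  have H7 : 0 ≤ β * ((a - b) * (2 * (s + a) - (a - b))) := by
    apply mul_nonneg hβ.le
    apply mul_nonneg (sub_nonneg.mpr hba)
    nlinarith
  have H8 : (0:ℝ) ≤ β ^ 2 * a ^ 3 * b := by positivity
  have H9 : (0:ℝ) ≤ β ^ 2 * a ^ 2 * b * u := by positivity
  nlinarith [H4, H5, H6, H7, H8, H9]

/-- Proposition 1 (one-step form): if the rate decreases from N̄ to N̄+1, it also
decreases from N̄+1 to N̄+2. -/
theorem rate_one_step_decrease
    (B β : ℝ) (hB : 0 < B) (hβ : 0 < β)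
    (α : ℕ → ℝ) (hα_pos : ∀ n, 1 ≤ n → 0 < α n)
    (hα_dec : ∀ n, 1 ≤ n → α (n + 1) ≤ α n)
    (hβα : 1 ≤ β * (α 1) ^ 2)
    (S : ℕ → ℝ) (hS : ∀ N, S N = ∑ n ∈ Finset.Icc 1 N, α n)
    (f : ℕ → ℝ) (hf : ∀ N, f N = B * Real.log (1 + β * (S N) ^ 2))
    (c d : ℝ) (hc : 0 < c) (hd : 0 < d)
    (R : ℕ → ℝ) (hR : ∀ N, R N = (c - d * (N : ℝ)) * f N)
    (Nbar : ℕ) (hNbar : 1 ≤ Nbar)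
    (hfeas : d * ((Nbar : ℝ) + 1) ≤ c)
    (hstep : R (Nbar + 1) ≤ R Nbar) :
    R (Nbar + 2) ≤ R (Nbar + 1) := by
  have hα1 : 0 < α 1 := hα_pos 1 le_rfl
  have ha : 0 < α (Nbar + 1) := hα_pos _ (by omega)
  have hb : 0 < α (Nbar + 2) := hα_pos _ (by omega)
  have hba : α (Nbar + 2) ≤ α (Nbar + 1) := hα_dec _ (by omega)
  set s := S Nbar with hs0
  set a := α (Nbar + 1) with ha0
  set b := α (Nbar + 2) with hb0
  have hsge : α 1 ≤ s := by
    rw [hs0, hS]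
    exact Finset.single_le_sum (f := α)
      (fun i hi => le_of_lt (hα_pos i (Finset.mem_Icc.mp hi).1))
      (Finset.mem_Icc.mpr ⟨le_rfl, hNbar⟩)
  have hspos : 0 < s := lt_of_lt_of_le hα1 hsge
  have hS1 : S (Nbar + 1) = s + a := by
    rw [hs0, hS, hS, Finset.sum_Icc_succ_top (by omega : 1 ≤ Nbar + 1)]
  have hS2 : S (Nbar + 2) = s + a + b := by
    have h : S (Nbar + 2) = S (Nbar + 1) + b := by
      rw [hS, hS, show Nbar + 2 = (Nbar + 1) + 1 from rfl,
        Finset.sum_Icc_succ_top (by omega : 1 ≤ Nbar + 1 + 1)]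
    rw [h, hS1]
  -- positivity of the log arguments
  have hu0 : (0:ℝ) < 1 + β * s ^ 2 := by positivity
  have hu1 : (0:ℝ) < 1 + β * (s + a) ^ 2 := by positivity
  have hu2 : (0:ℝ) < 1 + β * (s + a + b) ^ 2 := by positivity
  -- f values
  have hf0 : f Nbar = B * Real.log (1 + β * s ^ 2) := by rw [hf]
  have hf1 : f (Nbar + 1) = B * Real.log (1 + β * (s + a) ^ 2) := by rw [hf, hS1]
  have hf2 : f (Nbar + 2) = B * Real.log (1 + β * (s + a + b) ^ 2) := by rw [hf, hS2]
  -- f is nonnegative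
  have hlog0 : 0 ≤ Real.log (1 + β * s ^ 2) := Real.log_nonneg (by nlinarith)
  have hg0 : 0 ≤ f Nbar := by rw [hf0]; positivity
  -- f is monotone on these points
  have hg01 : f Nbar ≤ f (Nbar + 1) := by
    rw [hf0, hf1]
    apply mul_le_mul_of_nonneg_left _ hB.le
    apply Real.log_le_log hu0
    nlinarith [mul_pos hβ (mul_pos hspos ha), mul_pos hβ (mul_pos ha ha)]
  have hg12 : f (Nbar + 1) ≤ f (Nbar + 2) := by
    rw [hf1, hf2]
    apply mul_le_mul_of_nonneg_left _ hB.le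
    apply Real.log_le_log hu1
    nlinarith [mul_pos hβ (mul_pos (add_pos hspos ha) hb), mul_pos hβ (mul_pos hb hb)]
  -- concavity: increments decrease
  have hconc : f (Nbar + 2) - f (Nbar + 1) ≤ f (Nbar + 1) - f Nbar := by
    have hkey := concav_aux β s a b (α 1) hβ ha hb hba hα1 hsge hβα
    have hlog : Real.log ((1 + β * (s + a + b) ^ 2) * (1 + β * s ^ 2))
        ≤ Real.log ((1 + β * (s + a) ^ 2) ^ 2) :=
      Real.log_le_log (by positivity) hkey
    rw [Real.log_mul (ne_of_gt hu2) (ne_of_gt hu0), Real.log_pow] at hlog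
    push_cast at hlog
    rw [hf0, hf1, hf2]
    have := mul_le_mul_of_nonneg_left hlog hB.le
    linarith [this]
  -- combine
  rw [hR, hR] at hstep ⊢
  push_cast at hstep ⊢
  rcases le_or_gt (c - d * ((Nbar : ℝ) + 2)) 0 with hcase | hcase
  · have h1 : 0 ≤ f (Nbar + 1) := hg0.trans hg01
    have h2 : 0 ≤ f (Nbar + 2) := h1.trans hg12
    have h3 : 0 ≤ c - d * ((Nbar : ℝ) + 1) := by linarith
    exact le_trans (mul_nonpos_of_nonpos_of_nonneg hcase h2) (mul_nonneg h3 h1)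
  · have e1 := mul_le_mul_of_nonneg_left hconc hcase.le
    have e2 : d * f Nbar ≤ d * f (Nbar + 1) := mul_le_mul_of_nonneg_left hg01 hd.le
    have e3 : 0 ≤ d * (f (Nbar + 1) - f Nbar) := mul_nonneg hd.le (sub_nonneg.mpr hg01)
    linarith [e1, e2, e3, hstep]
end

section
/- (Proposition 1, full unimodality of the rate) If N̄ ≥ 1 is a natural number such that R(N̄+1) ≤ R(N̄), then R is nonincreasing beyond N̄ on the feasible range: for every natural number N with N̄ ≤ N and d·(N+1) ≤ c, one has R(N+1) ≤ R(N). -/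
lemma log_key (β x y t : ℝ) (hβ : 0 < β) (h1 : 1 ≤ β * x ^ 2) (hx : 0 < x)
    (hxy : x ≤ y) (ht : 0 ≤ t) :
    Real.log (1 + β * (y + t) ^ 2) - Real.log (1 + β * y ^ 2) ≤
      Real.log (1 + β * (x + t) ^ 2) - Real.log (1 + β * x ^ 2) := by
  have hA : (0:ℝ) < 1 + β * (y + t) ^ 2 := by positivity
  have hBp : (0:ℝ) < 1 + β * x ^ 2 := by positivity
  have hC : (0:ℝ) < 1 + β * (x + t) ^ 2 := by positivity
  have hD : (0:ℝ) < 1 + β * y ^ 2 := by positivity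
  have hxy' : 1 ≤ β * (x * y) := by nlinarith
  have key : (1 + β * (y + t) ^ 2) * (1 + β * x ^ 2) ≤
      (1 + β * (x + t) ^ 2) * (1 + β * y ^ 2) := by
    have hy : 0 < y := lt_of_lt_of_le hx hxy
    have hbr : 0 ≤ β * (2 * (x * y) + t * (x + y)) - 2 := by
      have h3 : 0 ≤ β * (t * (x + y)) :=
        mul_nonneg hβ.le (mul_nonneg ht (by linarith))
      nlinarith
    have hmain : 0 ≤ β * t * (y - x) * (β * (2 * (x * y) + t * (x + y)) - 2) :=
      mul_nonneg (mul_nonneg (mul_nonneg hβ.le ht) (by linarith)) hbr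
    nlinarith [hmain]
  have h := Real.log_le_log (by positivity) key
  rw [Real.log_mul hA.ne' hBp.ne', Real.log_mul hC.ne' hD.ne'] at h
  linarith

/-- Proposition 1 (full unimodality of the rate): once the rate decreases, it keeps
decreasing on the feasible range. -/
theorem rate_unimodal
    (B β : ℝ) (hB : 0 < B) (hβ : 0 < β)
    (α : ℕ → ℝ) (hα_pos : ∀ n, 1 ≤ n → 0 < α n)
    (hα_dec : ∀ n, 1 ≤ n → α (n + 1) ≤ α n)
    (hβα : 1 ≤ β * (α 1) ^ 2)
    (S : ℕ → ℝ) (hS : ∀ N, S N = ∑ n ∈ Finset.Icc 1 N, α n)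
    (f : ℕ → ℝ) (hf : ∀ N, f N = B * Real.log (1 + β * (S N) ^ 2))
    (c d : ℝ) (hc : 0 < c) (hd : 0 < d)
    (R : ℕ → ℝ) (hR : ∀ N, R N = (c - d * (N : ℝ)) * f N)
    (Nbar : ℕ) (hNbar : 1 ≤ Nbar)
    (hstep : R (Nbar + 1) ≤ R Nbar) :
    ∀ N : ℕ, Nbar ≤ N → d * ((N : ℝ) + 1) ≤ c → R (N + 1) ≤ R N := by
  have hα1 : 0 < α 1 := hα_pos 1 le_rfl
  have hS_step : ∀ N, 1 ≤ N → S (N + 1) = S N + α (N + 1) := by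
    intro N hN
    rw [hS, hS, Finset.sum_Icc_succ_top (by omega : 1 ≤ N + 1)]
  have hS_ge : ∀ N, 1 ≤ N → α 1 ≤ S N := by
    intro N hN
    induction N with
    | zero => omega
    | succ n ih =>
      rcases Nat.eq_or_lt_of_le hN with h | h
      · rw [hS]
        simp [← h]
      · have hn : 1 ≤ n := by omega
        rw [hS_step n hn]
        have := hα_pos (n + 1) (by omega)
        linarith [ih hn]
  have hS_pos : ∀ N, 1 ≤ N → 0 < S N := fun N hN => lt_of_lt_of_le hα1 (hS_ge N hN)
  have hβS : ∀ N, 1 ≤ N → 1 ≤ β * (S N) ^ 2 := by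
    intro N hN
    have h1 := hS_ge N hN
    have h2 : β * (α 1) ^ 2 ≤ β * (S N) ^ 2 := by
      apply mul_le_mul_of_nonneg_left _ hβ.le
      nlinarith [hS_pos N hN]
    linarith
  have hf_nonneg : ∀ N, 1 ≤ N → 0 ≤ f N := by
    intro N hN
    rw [hf]
    have : (0:ℝ) ≤ Real.log (1 + β * (S N) ^ 2) := Real.log_nonneg (by nlinarith [hβS N hN])
    positivity
  -- difference of f is nonnegative
  have hΔ_nonneg : ∀ N, 1 ≤ N → 0 ≤ f (N + 1) - f N := by
    intro N hN
    rw [hf, hf, hS_step N hN]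
    have hα := hα_pos (N + 1) (by omega)
    have hSN := hS_pos N hN
    have hlog : Real.log (1 + β * (S N) ^ 2) ≤ Real.log (1 + β * (S N + α (N + 1)) ^ 2) := by
      apply Real.log_le_log (by positivity)
      have : β * (S N) ^ 2 ≤ β * (S N + α (N + 1)) ^ 2 := by
        apply mul_le_mul_of_nonneg_left _ hβ.le
        nlinarith
      linarith
    nlinarith
  -- difference of f is nonincreasing
  have hΔ_dec : ∀ N, 1 ≤ N → f (N + 2) - f (N + 1) ≤ f (N + 1) - f N := by
    intro N hN
    have hα1' := hα_pos (N + 1) (by omega)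
    have hα2' := hα_pos (N + 2) (by omega)
    have hdec := hα_dec (N + 1) (by omega)
    have hSN := hS_pos N hN
    set x := S N with hx
    set a := α (N + 1)
    set b := α (N + 2)
    have e1 : S (N + 1) = x + a := hS_step N hN
    have e2 : S (N + 2) = x + a + b := by rw [hS_step (N + 1) (by omega), e1]
    rw [hf, hf, hf, e1, e2]
    have h1 : Real.log (1 + β * (x + a + b) ^ 2) ≤ Real.log (1 + β * (x + a + a) ^ 2) := by
      apply Real.log_le_log (by positivity)
      have : β * (x + a + b) ^ 2 ≤ β * (x + a + a) ^ 2 := by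
        apply mul_le_mul_of_nonneg_left _ hβ.le
        nlinarith
      linarith
    have h2 : Real.log (1 + β * ((x + a) + a) ^ 2) - Real.log (1 + β * (x + a) ^ 2) ≤
        Real.log (1 + β * (x + a) ^ 2) - Real.log (1 + β * x ^ 2) :=
      log_key β x (x + a) a hβ (hβS N hN) hSN (by linarith) (by linarith)
    have h2' : Real.log (1 + β * (x + a + a) ^ 2) - Real.log (1 + β * (x + a) ^ 2) ≤
        Real.log (1 + β * (x + a) ^ 2) - Real.log (1 + β * x ^ 2) := by
      have : (x + a) + a = x + a + a := by ring
      rwa [this] at h2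
    nlinarith
  intro N hN
  induction N, hN using Nat.le_induction with
  | base => exact fun _ => hstep
  | succ N hN ih =>
    intro hfeas2
    push_cast at hfeas2
    have hN1 : 1 ≤ N := le_trans hNbar hN
    have hfeas1 : d * ((N : ℝ) + 1) ≤ c := by nlinarith
    have hG : R (N + 1) ≤ R N := ih hfeas1
    have hΔ1 := hΔ_nonneg N hN1
    have hΔ2 := hΔ_nonneg (N + 1) (by omega)
    have hΔd := hΔ_dec N hN1
    have hfN := hf_nonneg N hN1
    -- rewrite R values
    have rN := hR N
    have rN1 := hR (N + 1)
    have rN2 := hR (N + 2)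
    push_cast at rN1 rN2
    have hprod : (c - d * ((N : ℝ) + 2)) * (f (N + 2) - f (N + 1)) ≤
        (c - d * ((N : ℝ) + 1)) * (f (N + 1) - f N) := by
      have h1 : (0:ℝ) ≤ c - d * ((N : ℝ) + 2) := by linarith
      have h2 : c - d * ((N : ℝ) + 2) ≤ c - d * ((N : ℝ) + 1) := by nlinarith
      nlinarith
    have key : R (N + 1 + 1) - R (N + 1) ≤ R (N + 1) - R N := by
      have : ((N:ℝ) + 1 + 1) = (N:ℝ) + 2 := by ring
      rw [rN, rN1, rN2]
      nlinarith [hΔ1]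
    linarith
end

section
/- (Decreasing increments of f) For every natural number N ≥ 1, the increments of f are nonincreasing: f(N+2) − f(N+1) ≤ f(N+1) − f(N). -/
lemma key_ineq (β a u v : ℝ) (hβ : 0 < β) (ha : 0 < a) (hv : 0 < v)
    (huv : v ≤ u) (h1 : 1 ≤ β * a ^ 2) :
    (1 + β * (a + u + v) ^ 2) * (1 + β * a ^ 2) ≤ (1 + β * (a + u) ^ 2) ^ 2 := by
  have hu : 0 < u := lt_of_lt_of_le hv huv
  have e1 : 2*β*u^2 ≤ 2*β^2*u^2*a^2 := by
    nlinarith [mul_le_mul_of_nonneg_left h1 (mul_nonneg hβ.le (sq_nonneg u))]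
  have e2 : β*(2*a*(v-u) + 2*u*v + v^2 - u^2) ≤ 2*β*u^2 := by
    nlinarith [mul_nonneg hβ.le (mul_nonneg ha.le (sub_nonneg.2 huv)),
      mul_nonneg hβ.le (mul_nonneg (sub_nonneg.2 huv) (by positivity : (0:ℝ) ≤ 3*u+v))]
  have e3 : 2*β^2*u^2*a^2 ≤ β^2*(a*(u-v)+u^2)*(2*a^2+3*a*u+a*v+u^2) := by
    have hX : 0 ≤ a*(u-v) := mul_nonneg ha.le (sub_nonneg.2 huv)
    have hY : 0 ≤ 3*a*u+a*v+u^2 := by positivity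
    nlinarith [mul_nonneg (sq_nonneg β) (mul_nonneg hX hY),
      mul_nonneg (sq_nonneg β) (mul_nonneg (sq_nonneg u) hY),
      mul_nonneg (sq_nonneg β) (mul_nonneg hX (mul_nonneg ha.le ha.le))]
  nlinarith [e1, e2, e3]

/-- Decreasing increments of f: the increments of f are nonincreasing. -/
theorem f_increments_nonincreasing
    (B β : ℝ) (hB : 0 < B) (hβ : 0 < β)
    (α : ℕ → ℝ) (hα_pos : ∀ n, 1 ≤ n → 0 < α n)
    (hα_dec : ∀ n, 1 ≤ n → α (n + 1) ≤ α n)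
    (hβα : 1 ≤ β * (α 1) ^ 2)
    (S : ℕ → ℝ) (hS : ∀ N, S N = ∑ n ∈ Finset.Icc 1 N, α n)
    (f : ℕ → ℝ) (hf : ∀ N, f N = B * Real.log (1 + β * (S N) ^ 2)) :
    ∀ N : ℕ, 1 ≤ N → f (N + 2) - f (N + 1) ≤ f (N + 1) - f N := by
  intro N hN
  have hS1 : S (N + 1) = S N + α (N + 1) := by
    rw [hS, hS, Finset.sum_Icc_succ_top (by omega)]
  have hS2 : S (N + 2) = S (N + 1) + α (N + 2) := by
    rw [hS, hS]
    exact Finset.sum_Icc_succ_top (by omega) α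
  -- S N ≥ α 1
  have hSa : α 1 ≤ S N := by
    rw [hS]
    have : ∑ n ∈ Finset.Icc 1 N, α n ≥ ∑ n ∈ Finset.Icc 1 1, α n := by
      apply Finset.sum_le_sum_of_subset_of_nonneg
      · exact Finset.Icc_subset_Icc_right hN
      · intro i hi _
        exact (hα_pos i (Finset.mem_Icc.1 hi).1).le
    simpa using this
  have ha0 : 0 < α 1 := hα_pos 1 le_rfl
  have hSpos : 0 < S N := lt_of_lt_of_le ha0 hSa
  have h1 : 1 ≤ β * (S N) ^ 2 := by
    refine le_trans hβα ?_
    have : (α 1) ^ 2 ≤ (S N) ^ 2 := by nlinarith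
    nlinarith
  set a := S N
  set u := α (N + 1)
  set v := α (N + 2)
  have hu : 0 < u := hα_pos _ (by omega)
  have hv : 0 < v := hα_pos _ (by omega)
  have huv : v ≤ u := hα_dec (N + 1) (by omega)
  have key : (1 + β * (S (N+2)) ^ 2) * (1 + β * a ^ 2) ≤ (1 + β * (S (N+1)) ^ 2) ^ 2 := by
    rw [hS2, hS1]
    have := key_ineq β a u v hβ hSpos hv huv h1
    convert this using 3 <;> ring_nf
  have p0 : (0:ℝ) < 1 + β * a ^ 2 := by positivity
  have p1 : (0:ℝ) < 1 + β * (S (N+1)) ^ 2 := by positivity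
  have p2 : (0:ℝ) < 1 + β * (S (N+2)) ^ 2 := by positivity
  have hlog : Real.log (1 + β * (S (N+2)) ^ 2) + Real.log (1 + β * a ^ 2)
      ≤ 2 * Real.log (1 + β * (S (N+1)) ^ 2) := by
    rw [← Real.log_mul p2.ne' p0.ne']
    calc Real.log ((1 + β * (S (N+2)) ^ 2) * (1 + β * a ^ 2))
        ≤ Real.log ((1 + β * (S (N+1)) ^ 2) ^ 2) :=
          Real.log_le_log (by positivity) key
      _ = 2 * Real.log (1 + β * (S (N+1)) ^ 2) := by
          rw [Real.log_pow]; push_cast; ring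
  rw [hf, hf, hf]
  nlinarith [hlog, hB]
end

section
/- (Inequality (17)) For every natural number N ≥ 1, one has α(N+2)²/(1 + β·S(N+1)²) + 2·α(N+2)·S(N+1)/(1 + β·S(N+1)²) ≤ α(N+1)²/(1 + β·S(N)²) + 2·α(N+1)·S(N)/(1 + β·S(N)²). -/
/-- Inequality (17). -/
theorem ineq_seventeen
    (B β : ℝ) (hB : 0 < B) (hβ : 0 < β)
    (α : ℕ → ℝ) (hα_pos : ∀ n, 1 ≤ n → 0 < α n)
    (hα_dec : ∀ n, 1 ≤ n → α (n + 1) ≤ α n)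
    (hβα : 1 ≤ β * (α 1) ^ 2)
    (S : ℕ → ℝ) (hS : ∀ N, S N = ∑ n ∈ Finset.Icc 1 N, α n)
    (f : ℕ → ℝ) (hf : ∀ N, f N = B * Real.log (1 + β * (S N) ^ 2)) :
    ∀ N : ℕ, 1 ≤ N →
      (α (N + 2)) ^ 2 / (1 + β * (S (N + 1)) ^ 2)
          + 2 * α (N + 2) * S (N + 1) / (1 + β * (S (N + 1)) ^ 2)
        ≤ (α (N + 1)) ^ 2 / (1 + β * (S N) ^ 2)
          + 2 * α (N + 1) * S N / (1 + β * (S N) ^ 2) := by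
  intro N hN
  have hs_eq : S (N + 1) = S N + α (N + 1) := by
    rw [hS, hS, Finset.sum_Icc_succ_top (by omega : 1 ≤ N + 1)]
  have ha : 0 < α (N + 1) := hα_pos _ (by omega)
  have hb : 0 < α (N + 2) := hα_pos _ (by omega)
  have hba : α (N + 2) ≤ α (N + 1) := hα_dec _ (by omega)
  have h1 : 0 < α 1 := hα_pos 1 le_rfl
  have hs1 : α 1 ≤ S N := by
    rw [hS]
    exact Finset.single_le_sum (f := α)
      (fun i hi => (hα_pos i (Finset.mem_Icc.mp hi).1).le)
      (Finset.mem_Icc.mpr ⟨le_rfl, hN⟩)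
  have hs : 0 < S N := lt_of_lt_of_le h1 hs1
  have hβs : 1 ≤ β * (S N) ^ 2 := by
    refine le_trans hβα ?_
    gcongr
  have hd1 : 0 < 1 + β * (S N) ^ 2 := by positivity
  have hd2 : 0 < 1 + β * (S (N + 1)) ^ 2 := by positivity
  rw [← add_div, ← add_div, div_le_div_iff₀ hd2 hd1, hs_eq]
  set a := α (N + 1)
  set b := α (N + 2)
  set s := S N
  have ht : 0 < s + a := by linarith
  have step1 : (b ^ 2 + 2 * b * (s + a)) * (1 + β * s ^ 2)
      ≤ (a ^ 2 + 2 * a * (s + a)) * (1 + β * s ^ 2) := by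
    have h : b ^ 2 + 2 * b * (s + a) ≤ a ^ 2 + 2 * a * (s + a) := by nlinarith
    exact mul_le_mul_of_nonneg_right h hd1.le
  have step2 : (a ^ 2 + 2 * a * (s + a)) * (1 + β * s ^ 2)
      ≤ (a ^ 2 + 2 * a * s) * (1 + β * (s + a) ^ 2) := by
    nlinarith [mul_nonneg (sq_nonneg a) (sub_nonneg.mpr hβs),
      mul_nonneg hβ.le (sq_nonneg (a * a)),
      mul_nonneg (mul_nonneg hβ.le (mul_pos (mul_pos ha ha) ha).le) hs.le]
  linarith
end

section
/- (Proposition 2, full unimodality of the energy efficiency) If N̄ ≥ 1 is a natural number with d·(N̄+1) ≤ c and EE(N̄+1) ≤ EE(N̄), then EE is nonincreasing beyond N̄ on the feasible range: for every natural number N with N̄ ≤ N and d·(N+1) ≤ c, one has EE(N+1) ≤ EE(N). -/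
lemma key_poly (β u a b : ℝ) (hβ : 0 < β) (hb : 0 < b) (hba : b ≤ a) (hau : a ≤ u)
    (h1 : 1 ≤ β * u ^ 2) :
    (1 + β * (u + a + b) ^ 2) * (1 + β * u ^ 2) ≤ (1 + β * (u + a) ^ 2) ^ 2 := by
  have ha : 0 < a := lt_of_lt_of_le hb hba
  have hu : 0 < u := lt_of_lt_of_le ha hau
  have hab : 0 ≤ a - b := sub_nonneg.2 hba
  have hf1 : a ^ 2 ≤ u * a + a ^ 2 - b * u := by nlinarith [mul_nonneg hab hu.le]
  have hf2 : 2 * u ^ 2 ≤ (u + a) ^ 2 + (u + a) * u + b * u := by nlinarith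
  have hT2 : a ^ 2 * (2 * u ^ 2) ≤ (u * a + a ^ 2 - b * u) * ((u + a) ^ 2 + (u + a) * u + b * u) :=
    mul_le_mul hf1 hf2 (by positivity) (by nlinarith [mul_nonneg hab hu.le])
  have hid : (u * a + a ^ 2 - b * u) * ((u + a) ^ 2 + (u + a) * u + b * u)
      = (u + a) ^ 4 - (u + a + b) ^ 2 * u ^ 2 := by ring
  rw [hid] at hT2
  have h4 : 2 * a ^ 2 ≤ β * ((u + a) ^ 4 - (u + a + b) ^ 2 * u ^ 2) := by
    nlinarith [mul_le_mul_of_nonneg_left hT2 hβ.le,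
      mul_nonneg (sub_nonneg.2 h1) (sq_nonneg a)]
  have hT1 : -(2 * a ^ 2) ≤ 2 * (u + a) ^ 2 - (u + a + b) ^ 2 - u ^ 2 := by
    nlinarith [mul_nonneg hab (add_pos hu ha).le, mul_nonneg hab (by linarith : (0:ℝ) ≤ a + b)]
  nlinarith [mul_le_mul_of_nonneg_left hT1 hβ.le, mul_le_mul_of_nonneg_left h4 hβ.le]

/-- Proposition 2 (full unimodality of the energy efficiency). -/
theorem ee_unimodal
    (B β : ℝ) (hB : 0 < B) (hβ : 0 < β)
    (α : ℕ → ℝ) (hα_pos : ∀ n, 1 ≤ n → 0 < α n)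
    (hα_dec : ∀ n, 1 ≤ n → α (n + 1) ≤ α n)
    (hβα : 1 ≤ β * (α 1) ^ 2)
    (S : ℕ → ℝ) (hS : ∀ N, S N = ∑ n ∈ Finset.Icc 1 N, α n)
    (f : ℕ → ℝ) (hf : ∀ N, f N = B * Real.log (1 + β * (S N) ^ 2))
    (c d : ℝ) (hc : 0 < c) (hd : 0 < d)
    (R : ℕ → ℝ) (hR : ∀ N, R N = (c - d * (N : ℝ)) * f N)
    (γ ψ : ℝ) (hγ : 0 < γ) (hψ : 0 < ψ)
    (EE : ℕ → ℝ) (hEE : ∀ N, EE N = R N / (γ + ψ * (N : ℝ)))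
    (Nbar : ℕ) (hNbar : 1 ≤ Nbar)
    (hfeas : d * ((Nbar : ℝ) + 1) ≤ c)
    (hstep : EE (Nbar + 1) ≤ EE Nbar) :
    ∀ N : ℕ, Nbar ≤ N → d * ((N : ℝ) + 1) ≤ c → EE (N + 1) ≤ EE N := by
  have hα1 : 0 < α 1 := hα_pos 1 le_rfl
  have hSsucc : ∀ N : ℕ, S (N + 1) = S N + α (N + 1) := by
    intro N
    rw [hS, hS, Finset.sum_Icc_succ_top (by omega : 1 ≤ N + 1)]
  have hS0 : ∀ N, 0 ≤ S N := by
    intro N; rw [hS]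
    exact Finset.sum_nonneg fun i hi => (hα_pos i (Finset.mem_Icc.mp hi).1).le
  have hSge : ∀ N, 1 ≤ N → α 1 ≤ S N := by
    intro N hN; rw [hS]
    exact Finset.single_le_sum (f := α)
      (fun i hi => (hα_pos i (Finset.mem_Icc.mp hi).1).le)
      (Finset.mem_Icc.mpr ⟨le_rfl, hN⟩)
  have hαle1 : ∀ n, 1 ≤ n → α n ≤ α 1 := by
    intro n hn
    induction n, hn using Nat.le_induction with
    | base => exact le_rfl
    | succ n hn ih => exact (hα_dec n hn).trans ih
  have hppos : ∀ N : ℕ, (0:ℝ) < 1 + β * (S N) ^ 2 := by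
    intro N; have := hS0 N; positivity
  have hSmono : ∀ N : ℕ, S N ≤ S (N + 1) := by
    intro N; rw [hSsucc]; linarith [hα_pos (N + 1) (by omega)]
  have hfmono : ∀ N : ℕ, f N ≤ f (N + 1) := by
    intro N
    rw [hf, hf]
    apply mul_le_mul_of_nonneg_left _ hB.le
    apply Real.log_le_log (hppos N)
    nlinarith [mul_nonneg hβ.le (mul_nonneg (sub_nonneg.2 (hSmono N))
      (by linarith [hS0 N, hSmono N] : (0:ℝ) ≤ S (N + 1) + S N))]
  have hfnn : ∀ N : ℕ, 0 ≤ f N := by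
    intro N
    rw [hf]
    apply mul_nonneg hB.le
    apply Real.log_nonneg
    nlinarith [hS0 N]
  -- concavity of f for N ≥ 1
  have hfconc : ∀ N : ℕ, 1 ≤ N → f (N + 2) - f (N + 1) ≤ f (N + 1) - f N := by
    intro N hN
    have hb : 0 < α (N + 2) := hα_pos (N + 2) (by omega)
    have hba : α (N + 2) ≤ α (N + 1) := hα_dec (N + 1) (by omega)
    have hau : α (N + 1) ≤ S N := (hαle1 (N + 1) (by omega)).trans (hSge N hN)
    have h1 : 1 ≤ β * (S N) ^ 2 := by
      have h := hSge N hN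
      nlinarith [mul_le_mul_of_nonneg_left (pow_le_pow_left₀ hα1.le h 2) hβ.le]
    have key := key_poly β (S N) (α (N + 1)) (α (N + 2)) hβ hb hba hau h1
    have hS1 : S (N + 1) = S N + α (N + 1) := hSsucc N
    have hS2 : S (N + 2) = S N + α (N + 1) + α (N + 2) := by
      rw [hSsucc (N + 1), hS1]
    have hp1 := hppos N
    have hp2 := hppos (N + 1)
    have hp3 := hppos (N + 2)
    have hlog : Real.log (1 + β * (S (N + 2)) ^ 2) + Real.log (1 + β * (S N) ^ 2)
        ≤ 2 * Real.log (1 + β * (S (N + 1)) ^ 2) := by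
      have hmul : Real.log ((1 + β * (S (N + 2)) ^ 2) * (1 + β * (S N) ^ 2))
          ≤ Real.log ((1 + β * (S (N + 1)) ^ 2) ^ 2) := by
        apply Real.log_le_log (by positivity)
        rw [hS1, hS2]; exact key
      rw [Real.log_mul hp3.ne' hp1.ne', Real.log_pow] at hmul
      push_cast at hmul
      linarith
    rw [hf, hf, hf]
    nlinarith [mul_le_mul_of_nonneg_left hlog hB.le]
  -- denominators are positive
  have hD : ∀ x : ℝ, 0 ≤ x → 0 < γ + ψ * x := by
    intro x hx; nlinarith
  -- cross-multiplied monotonicity condition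
  suffices hP : ∀ M : ℕ, Nbar ≤ M → d * ((M : ℝ) + 1) ≤ c →
      R (M + 1) * (γ + ψ * (M : ℝ)) ≤ R M * (γ + ψ * ((M : ℝ) + 1)) by
    intro N hN hfe
    rw [hEE, hEE, div_le_div_iff₀ (hD _ (by positivity)) (hD _ (Nat.cast_nonneg N))]
    push_cast
    have := hP N hN hfe
    linarith
  intro M hM
  induction M, hM using Nat.le_induction with
  | base =>
    intro _
    rw [hEE, hEE, div_le_div_iff₀ (hD _ (by positivity)) (hD _ (Nat.cast_nonneg Nbar))] at hstep
    push_cast at hstep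
    linarith
  | succ M hM ih =>
    intro hfe2
    push_cast at hfe2
    have hfe1 : d * ((M : ℝ) + 1) ≤ c := by nlinarith
    have hC := ih hfe1
    -- concavity of R on the feasible range
    have hconc : R (M + 2) - R (M + 1) ≤ R (M + 1) - R M := by
      have h1 := hfconc M (le_trans hNbar hM)
      have h2 := hfmono (M + 1)
      have h3 := hfmono M
      have hc2 : 0 ≤ c - d * ((M : ℝ) + 2) := by linarith
      rw [hR, hR, hR]
      push_cast
      nlinarith [mul_nonneg hc2 (by linarith : 0 ≤ (f (M + 1) - f M) - (f (M + 2) - f (M + 1))),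
        mul_nonneg hd.le (by linarith : 0 ≤ f (M + 1) - f M)]
    have hMnn : (0:ℝ) ≤ (M : ℝ) := Nat.cast_nonneg M
    have hprod : 0 ≤ ((R (M + 1) - R M) - (R (M + 2) - R (M + 1))) * (γ + ψ * (M : ℝ) + ψ) := by
      apply mul_nonneg (by linarith)
      nlinarith
    rw [show M + 1 + 1 = M + 2 from rfl]
    push_cast
    push_cast at hC
    linarith [hC, hprod]
end

section
/- (Proposition 3, unimodality of the scalarized rate–energy-efficiency objective) Let w be a real number with 0 < w < 1 and let R_opt and EE_opt be arbitrary real constants. Define G(N) = min{ w·(R(N) − R_opt), (1 − w)·(EE(N) − EE_opt) }. If N̄ ≥ 1 is a natural number with d·(N̄+1) ≤ c and G(N̄+1) ≤ G(N̄), then for every natural number N with N̄ ≤ N and d·(N+1) ≤ c, one has G(N+1) ≤ G(N). -/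
lemma logconc_aux (β S0 a1 a2 : ℝ) (hβ : 0 < β) (hS0 : 0 < S0) (ha2 : 0 < a2)
    (h12 : a2 ≤ a1) (h1 : 1 ≤ β * S0 ^ 2) :
    (1 + β * S0 ^ 2) * (1 + β * (S0 + a1 + a2) ^ 2) ≤ (1 + β * (S0 + a1) ^ 2) ^ 2 := by
  set S1 : ℝ := S0 + a1 with hS1
  set S2 : ℝ := S0 + a1 + a2 with hS2
  have ha1 : 0 < a1 := lt_of_lt_of_le ha2 h12
  have e1 : 1 ≤ β * S1 ^ 2 := by
    have h : S0 ^ 2 ≤ S1 ^ 2 := by nlinarith [mul_nonneg ha1.le (by linarith : (0:ℝ) ≤ 2 * S0 + a1)]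
    nlinarith [mul_le_mul_of_nonneg_left h hβ.le]
  have e2 : 1 ≤ β * (S0 * S2) := by
    have h : S0 ^ 2 ≤ S0 * S2 := by nlinarith [mul_nonneg hS0.le (by linarith : (0:ℝ) ≤ a1 + a2)]
    nlinarith [mul_le_mul_of_nonneg_left h hβ.le]
  have hA : 2 ≤ β * (S1 ^ 2 + S0 * S2) := by nlinarith [e1, e2]
  have hB : 0 ≤ S1 * (a1 - a2) + a1 * a2 := by nlinarith [mul_nonneg (by linarith : (0:ℝ) ≤ S1) (by linarith : (0:ℝ) ≤ a1 - a2), mul_nonneg ha1.le ha2.le]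
  have hC : S0 ^ 2 + S2 ^ 2 - 2 * S1 ^ 2 ≤ 2 * (S1 * (a1 - a2) + a1 * a2) := by
    nlinarith [mul_nonneg (by linarith : (0:ℝ) ≤ a1 - a2) (by linarith : (0:ℝ) ≤ 4 * S1 - (a1 - a2))]
  have key : β * (S0 ^ 2 + S2 ^ 2 - 2 * S1 ^ 2) ≤ β ^ 2 * (S1 ^ 2 - S0 * S2) * (S1 ^ 2 + S0 * S2) := by
    calc β * (S0 ^ 2 + S2 ^ 2 - 2 * S1 ^ 2)
        ≤ β * (2 * (S1 * (a1 - a2) + a1 * a2)) := mul_le_mul_of_nonneg_left hC hβ.le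
      _ ≤ β * ((β * (S1 ^ 2 + S0 * S2)) * (S1 * (a1 - a2) + a1 * a2)) := by
          exact mul_le_mul_of_nonneg_left (mul_le_mul_of_nonneg_right hA hB) hβ.le
      _ = β ^ 2 * (S1 ^ 2 - S0 * S2) * (S1 ^ 2 + S0 * S2) := by rw [hS1, hS2]; ring
  nlinarith [key]

/-- Proposition 3 (unimodality of the scalarized rate–energy-efficiency objective). -/
theorem scalarized_objective_unimodal
    (B β : ℝ) (hB : 0 < B) (hβ : 0 < β)
    (α : ℕ → ℝ) (hα_pos : ∀ n, 1 ≤ n → 0 < α n)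
    (hα_dec : ∀ n, 1 ≤ n → α (n + 1) ≤ α n)
    (hβα : 1 ≤ β * (α 1) ^ 2)
    (S : ℕ → ℝ) (hS : ∀ N, S N = ∑ n ∈ Finset.Icc 1 N, α n)
    (f : ℕ → ℝ) (hf : ∀ N, f N = B * Real.log (1 + β * (S N) ^ 2))
    (c d : ℝ) (hc : 0 < c) (hd : 0 < d)
    (R : ℕ → ℝ) (hR : ∀ N, R N = (c - d * (N : ℝ)) * f N)
    (γ ψ : ℝ) (hγ : 0 < γ) (hψ : 0 < ψ)
    (EE : ℕ → ℝ) (hEE : ∀ N, EE N = R N / (γ + ψ * (N : ℝ)))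
    (w : ℝ) (hw₀ : 0 < w) (hw₁ : w < 1)
    (Ropt EEopt : ℝ)
    (G : ℕ → ℝ)
    (hG : ∀ N, G N = min (w * (R N - Ropt)) ((1 - w) * (EE N - EEopt)))
    (Nbar : ℕ) (hNbar : 1 ≤ Nbar)
    (hfeas : d * ((Nbar : ℝ) + 1) ≤ c)
    (hstep : G (Nbar + 1) ≤ G Nbar) :
    ∀ N : ℕ, Nbar ≤ N → d * ((N : ℝ) + 1) ≤ c → G (N + 1) ≤ G N := by
  -- basic facts
  have hα1 : 0 < α 1 := hα_pos 1 le_rfl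
  have hSstep : ∀ N : ℕ, S (N + 1) = S N + α (N + 1) := by
    intro N
    rw [hS, hS, Finset.sum_Icc_succ_top (Nat.succ_le_succ (Nat.zero_le N))]
  have hSge : ∀ N, 1 ≤ N → α 1 ≤ S N := by
    intro N hN
    rw [hS]
    exact Finset.single_le_sum (fun i hi => (hα_pos i (Finset.mem_Icc.mp hi).1).le)
      (Finset.mem_Icc.mpr ⟨le_rfl, hN⟩)
  have hSpos : ∀ N, 1 ≤ N → 0 < S N := fun N hN => lt_of_lt_of_le hα1 (hSge N hN)
  have hβS : ∀ N, 1 ≤ N → 1 ≤ β * (S N) ^ 2 := by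
    intro N hN
    refine le_trans hβα ?_
    have h : (α 1) ^ 2 ≤ (S N) ^ 2 := pow_le_pow_left₀ hα1.le (hSge N hN) 2
    have := mul_le_mul_of_nonneg_left h hβ.le
    linarith
  have hxpos : ∀ N : ℕ, (0:ℝ) < 1 + β * (S N) ^ 2 := by
    intro N; positivity
  have hf0 : ∀ N, 1 ≤ N → 0 ≤ f N := by
    intro N hN
    rw [hf]
    have h := mul_nonneg hβ.le (sq_nonneg (S N))
    exact mul_nonneg hB.le (Real.log_nonneg (by linarith))
  have hfm : ∀ N, 1 ≤ N → f N ≤ f (N + 1) := by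
    intro N hN
    rw [hf, hf]
    apply mul_le_mul_of_nonneg_left _ hB.le
    apply Real.log_le_log (hxpos N)
    have h1 : S N ≤ S (N + 1) := by
      rw [hSstep]; linarith [hα_pos (N + 1) (by omega)]
    have h2 : (S N) ^ 2 ≤ (S (N + 1)) ^ 2 := pow_le_pow_left₀ (hSpos N hN).le h1 2
    have := mul_le_mul_of_nonneg_left h2 hβ.le
    linarith
  -- second differences of f
  have hΔf : ∀ N, 1 ≤ N → f (N + 2) - f (N + 1) ≤ f (N + 1) - f N := by
    intro N hN
    have e1 : S (N + 1) = S N + α (N + 1) := hSstep N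
    have e2 : S (N + 2) = S N + α (N + 1) + α (N + 2) := by
      rw [show N + 2 = (N + 1) + 1 from rfl, hSstep, hSstep]
    have hkey : (1 + β * (S N) ^ 2) * (1 + β * (S (N + 2)) ^ 2) ≤ (1 + β * (S (N + 1)) ^ 2) ^ 2 := by
      rw [e1, e2]
      exact logconc_aux β (S N) (α (N + 1)) (α (N + 2)) hβ (hSpos N hN)
        (hα_pos (N + 2) (by omega)) (hα_dec (N + 1) (by omega)) (hβS N hN)
    have hlog : Real.log (1 + β * (S (N + 2)) ^ 2) + Real.log (1 + β * (S N) ^ 2)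
        ≤ 2 * Real.log (1 + β * (S (N + 1)) ^ 2) := by
      have h := Real.log_le_log (by positivity) hkey
      rw [Real.log_mul (ne_of_gt (hxpos N)) (ne_of_gt (hxpos (N + 2))), Real.log_pow] at h
      push_cast at h
      linarith
    rw [hf, hf, hf]
    have := mul_le_mul_of_nonneg_left hlog hB.le
    linarith
  -- concavity of R on the feasible region
  have hconc : ∀ N : ℕ, 1 ≤ N → d * ((N:ℝ) + 2) ≤ c →
      R (N + 2) - R (N + 1) ≤ R (N + 1) - R N := by
    intro N hN hfe
    have h1 := hΔf N hN
    have h2 := hfm N hN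
    have h4 : 0 ≤ c - d * ((N:ℝ) + 2) := by linarith
    have p1 := mul_nonneg h4 (by linarith : (0:ℝ) ≤ (f (N + 1) - f N) - (f (N + 2) - f (N + 1)))
    have p2 := mul_nonneg hd.le (by linarith : (0:ℝ) ≤ f (N + 1) - f N)
    have key : (c - d * ((N:ℝ) + 1)) * f (N + 1) - (c - d * (N:ℝ)) * f N
        - ((c - d * ((N:ℝ) + 2)) * f (N + 2) - (c - d * ((N:ℝ) + 1)) * f (N + 1))
        = (c - d * ((N:ℝ) + 2)) * ((f (N + 1) - f N) - (f (N + 2) - f (N + 1)))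
          + 2 * (d * (f (N + 1) - f N)) := by ring
    rw [hR, hR, hR]
    push_cast
    linarith [key, p1, p2]
  -- nonnegativity of R at feasible points
  have hR0 : ∀ N : ℕ, 1 ≤ N → d * (N:ℝ) ≤ c → 0 ≤ R N := by
    intro N hN hfe
    rw [hR]
    exact mul_nonneg (by linarith) (hf0 N hN)
  have hLpos : ∀ N : ℕ, (0:ℝ) < γ + ψ * (N:ℝ) := by
    intro N
    have : (0:ℝ) ≤ (N:ℝ) := Nat.cast_nonneg N
    nlinarith
  -- EE decreasing from R decreasing
  have hEEofR : ∀ N : ℕ, 1 ≤ N → d * ((N:ℝ) + 1) ≤ c → R (N + 1) ≤ R N → EE (N + 1) ≤ EE N := by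
    intro N hN hfe hr
    rw [hEE, hEE, div_le_div_iff₀ (hLpos (N + 1)) (hLpos N)]
    have h0 : 0 ≤ R (N + 1) := hR0 (N + 1) (by omega) (by push_cast; linarith)
    have q1 : R (N + 1) * (γ + ψ * (N:ℝ)) ≤ R (N + 1) * (γ + ψ * ((N:ℝ) + 1)) :=
      mul_le_mul_of_nonneg_left (by nlinarith) h0
    have q2 : R (N + 1) * (γ + ψ * ((N:ℝ) + 1)) ≤ R N * (γ + ψ * ((N:ℝ) + 1)) :=
      mul_le_mul_of_nonneg_right hr (by positivity)
    push_cast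
    linarith
  -- EE unimodality
  have hEEuni : ∀ N : ℕ, 1 ≤ N → d * ((N:ℝ) + 2) ≤ c → EE (N + 1) ≤ EE N → EE (N + 2) ≤ EE (N + 1) := by
    intro N hN hfe hee
    have hcc := hconc N hN hfe
    rw [hEE, hEE, div_le_div_iff₀ (hLpos (N + 1)) (hLpos N)] at hee
    rw [hEE, hEE, div_le_div_iff₀ (hLpos (N + 2)) (hLpos (N + 1))]
    have hA : R (N + 2) * (γ + ψ * ((N:ℝ) + 1)) ≤ (2 * R (N + 1) - R N) * (γ + ψ * ((N:ℝ) + 1)) :=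
      mul_le_mul_of_nonneg_right (by linarith) (by positivity)
    push_cast at hee ⊢
    linarith [hA, hee]
  -- from a G-step, derive the invariant data
  have hbase : ∀ N : ℕ, 1 ≤ N → d * ((N:ℝ) + 1) ≤ c → G (N + 1) ≤ G N →
      EE (N + 1) ≤ EE N ∧ (R (N + 1) ≤ R N ∨
        (1 - w) * (EE (N + 1) - EEopt) ≤ w * (R (N + 1) - Ropt)) := by
    intro N hN hfe hg
    by_cases hr : R (N + 1) ≤ R N
    · exact ⟨hEEofR N hN hfe hr, Or.inl hr⟩
    · push_neg at hr
      have ha : w * (R N - Ropt) < w * (R (N + 1) - Ropt) :=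
        mul_lt_mul_of_pos_left (by linarith) hw₀
      rw [hG, hG] at hg
      have h1 : min (w * (R (N + 1) - Ropt)) ((1 - w) * (EE (N + 1) - EEopt))
          < w * (R (N + 1) - Ropt) :=
        lt_of_le_of_lt (le_trans hg (min_le_left _ _)) ha
      have h2 : (1 - w) * (EE (N + 1) - EEopt) ≤ w * (R (N + 1) - Ropt) := by
        rcases min_cases (w * (R (N + 1) - Ropt)) ((1 - w) * (EE (N + 1) - EEopt)) with ⟨he, _⟩ | ⟨_, hle⟩
        · rw [he] at h1; exact absurd h1 (lt_irrefl _)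
        · exact hle.le
      have h3 : (1 - w) * (EE (N + 1) - EEopt) ≤ (1 - w) * (EE N - EEopt) := by
        have hmin : min (w * (R (N + 1) - Ropt)) ((1 - w) * (EE (N + 1) - EEopt))
            = (1 - w) * (EE (N + 1) - EEopt) := min_eq_right h2
        rw [hmin] at hg
        exact le_trans hg (min_le_right _ _)
      have hw' : (0:ℝ) < 1 - w := by linarith
      have hEE' : EE (N + 1) ≤ EE N := by
        have := (mul_le_mul_iff_right₀ hw').mp h3
        linarith
      exact ⟨hEE', Or.inr h2⟩
  -- main induction
  have main : ∀ N : ℕ, Nbar ≤ N → (d * ((N:ℝ) + 1) ≤ c →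
      G (N + 1) ≤ G N ∧ EE (N + 1) ≤ EE N ∧ (R (N + 1) ≤ R N ∨
        (1 - w) * (EE (N + 1) - EEopt) ≤ w * (R (N + 1) - Ropt))) := by
    intro N hN
    induction N, hN using Nat.le_induction with
    | base =>
      intro hfe
      obtain ⟨h1, h2⟩ := hbase Nbar hNbar hfe hstep
      exact ⟨hstep, h1, h2⟩
    | succ N hN ih =>
      intro hfe2
      have hN1 : 1 ≤ N := le_trans hNbar hN
      have hfe2' : d * ((N:ℝ) + 2) ≤ c := by push_cast at hfe2; linarith
      have hfe1 : d * ((N:ℝ) + 1) ≤ c := by linarith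
      obtain ⟨hG1, hEE1, hdisj⟩ := ih hfe1
      have hEE2 : EE (N + 2) ≤ EE (N + 1) := hEEuni N hN1 hfe2' hEE1
      have hcc := hconc N hN1 hfe2'
      rcases hdisj with hr | hba
      · have hr2 : R (N + 2) ≤ R (N + 1) := by linarith
        have hGstep : G (N + 1 + 1) ≤ G (N + 1) := by
          rw [hG, hG]
          apply min_le_min
          · exact mul_le_mul_of_nonneg_left (by linarith) hw₀.le
          · exact mul_le_mul_of_nonneg_left (by linarith) (by linarith : (0:ℝ) ≤ 1 - w)
        exact ⟨hGstep, hEE2, Or.inl hr2⟩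
      · have hb2 : (1 - w) * (EE (N + 2) - EEopt) ≤ (1 - w) * (EE (N + 1) - EEopt) :=
          mul_le_mul_of_nonneg_left (by linarith) (by linarith : (0:ℝ) ≤ 1 - w)
        have hGN1 : G (N + 1) = (1 - w) * (EE (N + 1) - EEopt) := by
          rw [hG]; exact min_eq_right hba
        have hGstep : G (N + 1 + 1) ≤ G (N + 1) := by
          rw [hGN1, hG]
          exact le_trans (min_le_right _ _) hb2
        by_cases hr2 : R (N + 2) ≤ R (N + 1)
        · exact ⟨hGstep, hEE2, Or.inl hr2⟩
        · push_neg at hr2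
          have ha2 : w * (R (N + 1) - Ropt) ≤ w * (R (N + 2) - Ropt) :=
            mul_le_mul_of_nonneg_left (by linarith) hw₀.le
          exact ⟨hGstep, hEE2, Or.inr (le_trans hb2 (le_trans hba ha2))⟩
  intro N hN hfe
  exact (main N hN hfe).1
end
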